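/- Let λ > 1/2 and consider the set A = {(s, −2λs) : s ∈ ℝ} ⊆ ℝ × ℝ (the graph of the derivative of f(x) = −λx²). For every (y, y*) ∈ ℝ × ℝ, taking s = (y + y*)/(1 − 2λ) one has r_L(s − y, −2λs − y*) = 0; consequently A is stably r_L-dense in ℝ × ℝ. -/
import Mathlib


/-- `r_L` on `ℝ × ℝ` (with `E* = ℝ`, pairing `x·x*`):
`r_L(x, x*) = ½x² + ½(x*)² + x·x* = ½(x + x*)²`. -/
noncomputable def rLR (x x' : ℝ) : ℝ :=
  1 / 2 * x ^ 2 + 1 / 2 * x' ^ 2 + x * x'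

/-- `A ⊆ ℝ × ℝ` is stably `r_L`-dense: for every `(y, y*)` there is `M ≥ 0` such that
the infimum of `r_L(s - y, s* - y*)` over `(s, s*) ∈ A` with `|s - y| ≤ M` and
`|s* - y*| ≤ M` is `0`. -/
def StablyRLDenseR (A : Set (ℝ × ℝ)) : Prop :=
  ∀ y y' : ℝ, ∃ M : ℝ, 0 ≤ M ∧
    ∀ ε > (0 : ℝ), ∃ p ∈ A, |p.1 - y| ≤ M ∧ |p.2 - y'| ≤ M ∧
      rLR (p.1 - y) (p.2 - y') < ε

theorem stmt7 (l : ℝ) (hl : 1 / 2 < l) :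
    (∀ y y' : ℝ,
      rLR ((y + y') / (1 - 2 * l) - y) (-2 * l * ((y + y') / (1 - 2 * l)) - y') = 0) ∧
    StablyRLDenseR {p : ℝ × ℝ | ∃ s : ℝ, p = (s, -2 * l * s)} := by
  have hne : 1 - 2 * l ≠ 0 := by linarith
  have key : ∀ y y' : ℝ,
      rLR ((y + y') / (1 - 2 * l) - y) (-2 * l * ((y + y') / (1 - 2 * l)) - y') = 0 := by
    intro y y'
    unfold rLR
    field_simp
    ring
  refine ⟨key, ?_⟩
  intro y y'
  set s := (y + y') / (1 - 2 * l) with hs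
  refine ⟨|s - y| ⊔ |(-2 * l * s) - y'|, le_trans (abs_nonneg _) le_sup_left, ?_⟩
  intro ε hε
  refine ⟨(s, -2 * l * s), ⟨s, rfl⟩, le_sup_left, le_sup_right, ?_⟩
  simpa using (key y y').le.trans_lt hε
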